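/- Let 0 < L < ∞, let f : ℝ^d → ℝ be convex and differentiable with L-Lipschitz gradient, let x_* be a global minimizer of f, and let x_0 ∈ ℝ^d satisfy ‖x_0 − x_*‖ ≤ R. Then the point x_1 = x_0 − (3/(2L)) ∇f(x_0) obtained by a single gradient step with step size 3/(2L) satisfies f(x_1) − f(x_*) ≤ L R² / 8. -/

import Mathlib

open scoped RealInnerProductSpace

section Helpers

variable {F : Type*} [NormedAddCommGroup F] [InnerProductSpace ℝ F] [CompleteSpace F]

/-- Derivative of a smooth function along a line. -/
lemma lineDeriv_aux (f : F → ℝ) (g : F → F) (hg : ∀ z, HasGradientAt f (g z) z)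
    (x v : F) (t : ℝ) :
    HasDerivAt (fun s : ℝ => f (x + s • v)) ⟪g (x + t • v), v⟫ t := by
  have h1 : HasDerivAt (fun s : ℝ => x + s • v) v t := by
    simpa using (hasDerivAt_id t).smul_const v
  have h3 : HasFDerivAt f (InnerProductSpace.toDual ℝ F (g (x + t • v))) (x + t • v) :=
    hasGradientAt_iff_hasFDerivAt.mp (hg _)
  exact h3.comp_hasDerivAt t h1

/-- The descent lemma for functions with Lipschitz gradient. -/
lemma descent_aux (L : ℝ) (hL : 0 < L) (f : F → ℝ) (g : F → F)
    (hg : ∀ z, HasGradientAt f (g z) z)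
    (hlip : ∀ x y, ‖g x - g y‖ ≤ L * ‖x - y‖) (x v : F) :
    f (x + v) ≤ f x + ⟪g x, v⟫ + L / 2 * ‖v‖ ^ 2 := by
  have hd : ∀ t : ℝ, HasDerivAt
      (fun t : ℝ => f (x + t • v) - t * ⟪g x, v⟫ - L / 2 * t ^ 2 * ‖v‖ ^ 2)
      (⟪g (x + t • v), v⟫ - ⟪g x, v⟫ - L * t * ‖v‖ ^ 2) t := by
    intro t
    have h1 := (lineDeriv_aux f g hg x v t).sub ((hasDerivAt_id t).mul_const ⟪g x, v⟫)
    have h2 := (((hasDerivAt_pow 2 t).const_mul (L / 2)).mul_const (‖v‖ ^ 2))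
    have h3 : HasDerivAt (fun t : ℝ => f (x + t • v) - t * ⟪g x, v⟫ - L / 2 * t ^ 2 * ‖v‖ ^ 2)
        (⟪g (x + t • v), v⟫ - 1 * ⟪g x, v⟫ - L / 2 * (((2:ℕ):ℝ) * t ^ 1) * ‖v‖ ^ 2) t := h1.sub h2
    convert h3 using 1
    ring
  have mono : AntitoneOn
      (fun t : ℝ => f (x + t • v) - t * ⟪g x, v⟫ - L / 2 * t ^ 2 * ‖v‖ ^ 2)
      (Set.Icc (0 : ℝ) 1) := by
    have hdiffψ : Differentiable ℝ
        (fun t : ℝ => f (x + t • v) - t * ⟪g x, v⟫ - L / 2 * t ^ 2 * ‖v‖ ^ 2) :=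
      fun t => (hd t).differentiableAt
    apply antitoneOn_of_deriv_nonpos (convex_Icc 0 1) hdiffψ.continuous.continuousOn
      hdiffψ.differentiableOn
    intro t ht
    rw [interior_Icc] at ht
    rw [(hd t).deriv]
    have h1 : ⟪g (x + t • v) - g x, v⟫ ≤ ‖g (x + t • v) - g x‖ * ‖v‖ :=
      real_inner_le_norm _ _
    have h2 : ‖g (x + t • v) - g x‖ ≤ L * (t * ‖v‖) := by
      have := hlip (x + t • v) x
      simpa [norm_smul, abs_of_pos ht.1] using this
    have h4 : ⟪g (x + t • v), v⟫ - ⟪g x, v⟫ = ⟪g (x + t • v) - g x, v⟫ := by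
      rw [inner_sub_left]
    nlinarith [norm_nonneg v, mul_le_mul_of_nonneg_right h2 (norm_nonneg v)]
  have h01 := mono (Set.left_mem_Icc.mpr zero_le_one) (Set.right_mem_Icc.mpr zero_le_one)
    zero_le_one
  simp only [zero_smul, add_zero, one_smul, zero_mul, zero_pow, mul_zero, sub_zero,
    one_mul, one_pow, mul_one] at h01
  linarith

/-- Convexity first-order lower bound. -/
lemma grad_lower_aux (f : F → ℝ) (g : F → F) (hg : ∀ z, HasGradientAt f (g z) z)
    (hcvx : ConvexOn ℝ Set.univ f) (x y : F) :
    f x + ⟪g x, y - x⟫ ≤ f y := by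
  have hline : ConvexOn ℝ Set.univ (fun t : ℝ => f (x + t • (y - x))) := by
    refine ⟨convex_univ, fun p _ q _ α β hα hβ hαβ => ?_⟩
    obtain rfl : β = 1 - α := by linarith
    have h := hcvx.2 (Set.mem_univ (x + p • (y - x))) (Set.mem_univ (x + q • (y - x))) hα hβ hαβ
    have e : α • (x + p • (y - x)) + (1 - α) • (x + q • (y - x))
        = x + (α • p + (1 - α) • q) • (y - x) := by
      simp only [smul_eq_mul]
      module
    rw [e] at h
    exact h
  have hd : HasDerivAt (fun t : ℝ => f (x + t • (y - x))) ⟪g x, y - x⟫ 0 := by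
    simpa using lineDeriv_aux f g hg x (y - x) 0
  have hs := hline.le_slope_of_hasDerivAt (Set.mem_univ (0 : ℝ)) (Set.mem_univ 1) one_pos hd
  rw [slope_def_field] at hs
  simp only [zero_smul, add_zero, one_smul, add_sub_cancel, sub_zero, div_one] at hs
  linarith

/-- The interpolation inequality for smooth convex functions (denominator-free form). -/
lemma interp_aux (L : ℝ) (hL : 0 < L) (f : F → ℝ) (g : F → F)
    (hg : ∀ z, HasGradientAt f (g z) z)
    (hcvx : ConvexOn ℝ Set.univ f)
    (hlip : ∀ x y, ‖g x - g y‖ ≤ L * ‖x - y‖) (x y : F) :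
    2 * L * (f y + ⟪g y, x - y⟫) + ‖g x - g y‖ ^ 2 ≤ 2 * L * f x := by
  obtain ⟨φ, hφ⟩ : ∃ φ : F → ℝ, φ = fun z => f z - ⟪g y, z⟫ := ⟨_, rfl⟩
  obtain ⟨G, hG⟩ : ∃ G : F → F, G = fun z => g z - g y := ⟨_, rfl⟩
  have hφ' : ∀ z, φ z = f z - ⟪g y, z⟫ := fun z => by rw [hφ]
  have hG' : ∀ z, G z = g z - g y := fun z => by rw [hG]
  have hgφ : ∀ z, HasGradientAt φ (G z) z := by
    intro z
    have h1 : HasFDerivAt f (InnerProductSpace.toDual ℝ F (g z)) z :=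
      hasGradientAt_iff_hasFDerivAt.mp (hg z)
    have h2 : HasFDerivAt (fun w : F => ⟪g y, w⟫) (InnerProductSpace.toDual ℝ F (g y)) z := by
      exact (InnerProductSpace.toDual ℝ F (g y)).hasFDerivAt
    have h3 := h1.sub h2
    rw [hasGradientAt_iff_hasFDerivAt, hφ, hG', map_sub]
    exact h3
  have hcφ : ConvexOn ℝ Set.univ φ := by
    refine ⟨convex_univ, fun p _ q _ α β hα hβ hαβ => ?_⟩
    have h := hcvx.2 (Set.mem_univ p) (Set.mem_univ q) hα hβ hαβ
    simp only [smul_eq_mul] at h ⊢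
    rw [hφ', hφ', hφ', inner_add_right, inner_smul_right, inner_smul_right]
    linarith
  have hlφ : ∀ a b, ‖G a - G b‖ ≤ L * ‖a - b‖ := by
    intro a b
    have e : G a - G b = g a - g b := by rw [hG', hG']; abel
    rw [e]; exact hlip a b
  have hGy : G y = 0 := by rw [hG']; simp
  have hdesc := descent_aux L hL φ G hgφ hlφ x ((-(1 / L)) • G x)
  have hmin' : φ y ≤ φ (x + (-(1 / L)) • G x) := by
    have h := grad_lower_aux φ G hgφ hcφ y (x + (-(1 / L)) • G x)
    simpa [hGy] using h
  have e1 : ⟪G x, (-(1 / L)) • G x⟫ = -(1 / L) * ‖G x‖ ^ 2 := by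
    rw [real_inner_smul_right, real_inner_self_eq_norm_sq]
  have e2 : ‖(-(1 / L)) • G x‖ ^ 2 = (1 / L) ^ 2 * ‖G x‖ ^ 2 := by
    rw [norm_smul, mul_pow, Real.norm_eq_abs, abs_neg, abs_of_pos (by positivity : (0:ℝ) < 1 / L)]
  have e3 : L / 2 * ((1 / L) ^ 2 * ‖G x‖ ^ 2) + (-(1 / L) * ‖G x‖ ^ 2)
      = -(1 / (2 * L)) * ‖G x‖ ^ 2 := by field_simp; ring
  have h5 : φ y ≤ φ x - 1 / (2 * L) * ‖G x‖ ^ 2 := by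
    rw [e1, e2] at hdesc
    linarith
  have h7 : 2 * L * (1 / (2 * L) * ‖G x‖ ^ 2) = ‖G x‖ ^ 2 := by
    field_simp
  have h6 := mul_le_mul_of_nonneg_left h5 (by positivity : (0 : ℝ) ≤ 2 * L)
  rw [mul_sub, h7] at h6
  have key : 2 * L * φ y + ‖G x‖ ^ 2 ≤ 2 * L * φ x := by linarith
  rw [hφ', hφ', hG'] at key
  have e4 : ⟪g y, x - y⟫ = ⟪g y, x⟫ - ⟪g y, y⟫ := inner_sub_right _ _ _
  rw [e4]
  linarith [key]

end Helpers

set_option maxHeartbeats 1600000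

/-- The 'simple example' of Section 3 of the paper: one gradient step with step size
`3/(2L)` on an `L`-smooth convex function started within distance `R` of a minimizer
satisfies `f(x₁) - f(x⋆) ≤ L R² / 8`. -/
theorem one_step_gradient_bound {d : ℕ} (L R : ℝ) (hL : 0 < L)
    (f : EuclideanSpace ℝ (Fin d) → ℝ)
    (hcvx : ConvexOn ℝ Set.univ f)
    (hdiff : Differentiable ℝ f)
    (hlip : ∀ x y, ‖gradient f x - gradient f y‖ ≤ L * ‖x - y‖)
    (xstar x₀ : EuclideanSpace ℝ (Fin d))
    (hmin : ∀ y, f xstar ≤ f y)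
    (hR : ‖x₀ - xstar‖ ≤ R) :
    f (x₀ - (3 / (2 * L)) • gradient f x₀) - f xstar ≤ L * R ^ 2 / 8 := by
  have hg : ∀ z, HasGradientAt f (gradient f z) z := fun z => (hdiff z).hasGradientAt
  -- the gradient vanishes at the minimizer
  have hgstar : gradient f xstar = 0 := by
    obtain ⟨w, hw⟩ : ∃ w, w = gradient f xstar := ⟨_, rfl⟩
    rw [← hw]
    have hdesc := descent_aux L hL f (gradient f) hg hlip xstar ((-(1 / L)) • w)
    rw [← hw] at hdesc
    have e1 : ⟪w, (-(1 / L)) • w⟫ = -(1 / L) * ‖w‖ ^ 2 := by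
      rw [real_inner_smul_right, real_inner_self_eq_norm_sq]
    have e2 : ‖(-(1 / L)) • w‖ ^ 2 = (1 / L) ^ 2 * ‖w‖ ^ 2 := by
      rw [norm_smul, mul_pow, Real.norm_eq_abs, abs_neg,
        abs_of_pos (by positivity : (0:ℝ) < 1 / L)]
    have e3 : L / 2 * ((1 / L) ^ 2 * ‖w‖ ^ 2) + (-(1 / L) * ‖w‖ ^ 2)
        = -(1 / (2 * L)) * ‖w‖ ^ 2 := by field_simp; ring
    rw [e1, e2] at hdesc
    have hmm := hmin (xstar + (-(1 / L)) • w)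
    have h8 : 1 / (2 * L) * ‖w‖ ^ 2 ≤ 0 := by linarith
    have h9 : (0 : ℝ) < 1 / (2 * L) := by positivity
    have h2 : ‖w‖ ^ 2 ≤ 0 := by nlinarith [h8, h9]
    have h10 : ‖w‖ ^ 2 = 0 := le_antisymm h2 (sq_nonneg _)
    have h11 : ‖w‖ = 0 := by
      have := pow_eq_zero_iff (n := 2) (by norm_num) |>.mp h10
      exact this
    exact norm_eq_zero.mp h11
  -- the three interpolation inequalities
  set g0 := gradient f x₀ with hg0
  set x₁ := x₀ - (3 / (2 * L)) • g0 with hx₁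
  have i1 := interp_aux L hL f (gradient f) hg hcvx hlip x₀ x₁
  have i2 := interp_aux L hL f (gradient f) hg hcvx hlip xstar x₀
  have i3 := interp_aux L hL f (gradient f) hg hcvx hlip xstar x₁
  rw [hgstar] at i2 i3
  set g1 := gradient f x₁ with hg1
  -- rewrite i1
  have e4 : x₀ - x₁ = (3 / (2 * L)) • g0 := by rw [hx₁]; abel
  have hi1 : ⟪g1, x₀ - x₁⟫ = 3 / (2 * L) * ⟪g0, g1⟫ := by
    rw [e4, real_inner_smul_right, real_inner_comm]
  have n1 : ‖g0 - g1‖ ^ 2 = ‖g0‖ ^ 2 - 2 * ⟪g0, g1⟫ + ‖g1‖ ^ 2 := norm_sub_sq_real g0 g1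
  rw [hi1, n1] at i1
  have expand1 : 2 * L * (f x₁ + 3 / (2 * L) * ⟪g0, g1⟫)
      = 2 * L * f x₁ + 3 * ⟪g0, g1⟫ := by field_simp
  -- rewrite i2
  have n2 : ‖(0 : EuclideanSpace ℝ (Fin d)) - g0‖ ^ 2 = ‖g0‖ ^ 2 := by
    rw [zero_sub, norm_neg]
  rw [n2] at i2
  -- rewrite i3
  have e5 : xstar - x₁ = (xstar - x₀) + (3 / (2 * L)) • g0 := by rw [hx₁]; abel
  have hi3 : ⟪g1, xstar - x₁⟫ = ⟪g1, xstar - x₀⟫ + 3 / (2 * L) * ⟪g0, g1⟫ := by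
    rw [e5, inner_add_right, real_inner_smul_right, real_inner_comm g1 g0]
  have n3 : ‖(0 : EuclideanSpace ℝ (Fin d)) - g1‖ ^ 2 = ‖g1‖ ^ 2 := by
    rw [zero_sub, norm_neg]
  rw [hi3, n3] at i3
  have expand3 : 2 * L * (f x₁ + (⟪g1, xstar - x₀⟫ + 3 / (2 * L) * ⟪g0, g1⟫))
      = 2 * L * f x₁ + 2 * L * ⟪g1, xstar - x₀⟫ + 3 * ⟪g0, g1⟫ := by field_simp; ring
  -- Cauchy-Schwarz
  have hN2 : ‖g0 + g1‖ ^ 2 = ‖g0‖ ^ 2 + 2 * ⟪g0, g1⟫ + ‖g1‖ ^ 2 := norm_add_sq_real g0 g1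
  have hcs : ⟪g0 + g1, x₀ - xstar⟫ ≤ ‖g0 + g1‖ * R :=
    le_trans (real_inner_le_norm _ _) (mul_le_mul_of_nonneg_left hR (norm_nonneg _))
  have hsplit : ⟪g0 + g1, x₀ - xstar⟫ = -(⟪g0, xstar - x₀⟫ + ⟪g1, xstar - x₀⟫) := by
    have e6 : x₀ - xstar = -(xstar - x₀) := by abel
    rw [e6, inner_neg_right, inner_add_left]
  rw [hsplit] at hcs
  have hcs2 := mul_le_mul_of_nonneg_left hcs (by positivity : (0 : ℝ) ≤ 2 * L)
  -- final combination
  nlinarith [i1, i2, i3, expand1, expand3, hcs2, hN2,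
    sq_nonneg (L * R - 2 * ‖g0 + g1‖), hL, mul_pos hL hL]
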